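/- Let a, b, c and (l_ij), (m_ij) and F be as in the generalized Monge–Ampère setup, and assume the normalization ∫_{𝕋²} e^F = ab − c². For t ∈ [0,1] and a twice continuously differentiable biperiodic function p, define S_t(p) = (a + p_xx − t·l₁₁p_x − t·m₁₁p_y)(b + p_yy − t·l₂₂p_x − t·m₂₂p_y) − (c + p_xy − t·l₁₂p_x − t·m₁₂p_y)² − (t·e^F + (1−t)(ab − c²)). Then for every t ∈ [0,1] and every smooth biperiodic p, ∫_{𝕋²} S_t(p) = 0. -/

import Mathlib

open MeasureTheory

/-- Partial derivative in the first variable. -/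
noncomputable def pdx (p : ℝ × ℝ → ℝ) (z : ℝ × ℝ) : ℝ := fderiv ℝ p z (1, 0)

/-- Partial derivative in the second variable. -/
noncomputable def pdy (p : ℝ × ℝ → ℝ) (z : ℝ × ℝ) : ℝ := fderiv ℝ p z (0, 1)

/-- A function `ℝ² → ℝ` is biperiodic if it has period 1 in each variable. -/
def Biperiodic (p : ℝ × ℝ → ℝ) : Prop :=
  ∀ x y : ℝ, p (x + 1, y) = p (x, y) ∧ p (x, y + 1) = p (x, y)

/-- The integral over the torus `𝕋² = ℝ²/ℤ²` of (the descent of) a biperiodic function. -/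
noncomputable def torusInt (f : ℝ × ℝ → ℝ) : ℝ := ∫ x in (0:ℝ)..1, ∫ y in (0:ℝ)..1, f (x, y)

namespace StAux

/-! ### Smoothness of partial derivatives -/

lemma contDiff_pdv {p : ℝ × ℝ → ℝ} (hp : ContDiff ℝ (⊤ : ℕ∞) p) (v : ℝ × ℝ) :
    ContDiff ℝ (⊤ : ℕ∞) (fun z => fderiv ℝ p z v) := by
  have h : ContDiff ℝ (⊤ : ℕ∞) (fderiv ℝ p) := hp.fderiv_right (by decide)
  exact (ContinuousLinearMap.apply ℝ ℝ v).contDiff.comp h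

lemma contDiff_pdx {p : ℝ × ℝ → ℝ} (hp : ContDiff ℝ (⊤ : ℕ∞) p) : ContDiff ℝ (⊤ : ℕ∞) (pdx p) :=
  contDiff_pdv hp _

lemma contDiff_pdy {p : ℝ × ℝ → ℝ} (hp : ContDiff ℝ (⊤ : ℕ∞) p) : ContDiff ℝ (⊤ : ℕ∞) (pdy p) :=
  contDiff_pdv hp _

/-! ### Clairaut / symmetry of second derivatives -/

lemma pdv_symm {p : ℝ × ℝ → ℝ} (hp : ContDiff ℝ (⊤ : ℕ∞) p) (v w : ℝ × ℝ) (z : ℝ × ℝ) :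
    fderiv ℝ (fun z' => fderiv ℝ p z' v) z w = fderiv ℝ (fun z' => fderiv ℝ p z' w) z v := by
  have h' : ContDiff ℝ (⊤ : ℕ∞) (fderiv ℝ p) := hp.fderiv_right (by decide)
  have hd : DifferentiableAt ℝ (fderiv ℝ p) z := (h'.differentiable (by decide)) z
  have hsymm : ∀ u u' : ℝ × ℝ, fderiv ℝ (fderiv ℝ p) z u u' = fderiv ℝ (fderiv ℝ p) z u' u :=
    hp.contDiffAt.isSymmSndFDerivAt (by
      rw [minSmoothness_of_isRCLikeNormedField]; exact WithTop.coe_le_coe.mpr (le_top : (2:ℕ∞) ≤ ⊤))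
  have key : ∀ u u' : ℝ × ℝ, fderiv ℝ (fun z' => fderiv ℝ p z' u) z u' =
      fderiv ℝ (fderiv ℝ p) z u' u := by
    intro u u'
    rw [fderiv_clm_apply hd (differentiableAt_const u)]
    simp
  rw [key, key, hsymm]

lemma pdxy_symm {p : ℝ × ℝ → ℝ} (hp : ContDiff ℝ (⊤ : ℕ∞) p) :
    pdx (pdy p) = pdy (pdx p) := by
  funext z
  exact pdv_symm hp (0, 1) (1, 0) z

/-! ### Translations and biperiodicity -/

lemma fderiv_translate {p : ℝ × ℝ → ℝ} (hp : Differentiable ℝ p) (c z : ℝ × ℝ) :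
    fderiv ℝ (fun w => p (w + c)) z = fderiv ℝ p (z + c) := by
  have : HasFDerivAt (fun w => p (w + c)) (fderiv ℝ p (z + c)) z := by
    have h1 : HasFDerivAt p (fderiv ℝ p (z + c)) (z + c) := (hp (z + c)).hasFDerivAt
    have h2 : HasFDerivAt (fun w : ℝ × ℝ => w + c) (ContinuousLinearMap.id ℝ (ℝ × ℝ)) z :=
      (hasFDerivAt_id z).add_const c
    have := h1.comp z h2
    rwa [ContinuousLinearMap.comp_id] at this
  exact this.fderiv

lemma Biperiodic.pdv {p : ℝ × ℝ → ℝ} (hp : Differentiable ℝ p) (hper : Biperiodic p)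
    (v : ℝ × ℝ) : Biperiodic (fun z => fderiv ℝ p z v) := by
  have e1 : (fun w : ℝ × ℝ => p (w + (1, 0))) = p := by
    funext w; have h := (hper w.1 w.2).1
    rw [show w + ((1:ℝ),(0:ℝ)) = (w.1+1, w.2) by simp [Prod.ext_iff]]; simpa using h
  have e2 : (fun w : ℝ × ℝ => p (w + (0, 1))) = p := by
    funext w; have h := (hper w.1 w.2).2
    rw [show w + ((0:ℝ),(1:ℝ)) = (w.1, w.2+1) by simp [Prod.ext_iff]]; simpa using h
  intro x y
  constructor
  · have := fderiv_translate hp ((1, 0) : ℝ × ℝ) (x, y)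
    rw [e1, show ((x, y) + ((1:ℝ), (0:ℝ))) = ((x + 1 : ℝ), y) by simp] at this
    simp only [← this]
  · have := fderiv_translate hp ((0, 1) : ℝ × ℝ) (x, y)
    rw [e2, show ((x, y) + ((0:ℝ), (1:ℝ))) = (x, (y + 1 : ℝ)) by simp] at this
    simp only [← this]

lemma Biperiodic.pdx' {p : ℝ × ℝ → ℝ} (hp : Differentiable ℝ p) (hper : Biperiodic p) :
    Biperiodic (pdx p) := Biperiodic.pdv hp hper (1, 0)

lemma Biperiodic.pdy' {p : ℝ × ℝ → ℝ} (hp : Differentiable ℝ p) (hper : Biperiodic p) :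
    Biperiodic (pdy p) := Biperiodic.pdv hp hper (0, 1)

lemma Biperiodic.mul {f g : ℝ × ℝ → ℝ} (hf : Biperiodic f) (hg : Biperiodic g) :
    Biperiodic (fun z => f z * g z) := by
  intro x y
  constructor
  · simp only [(hf x y).1, (hg x y).1]
  · simp only [(hf x y).2, (hg x y).2]

/-! ### Derivatives along coordinate lines -/

lemma hasDerivAt_pdx {p : ℝ × ℝ → ℝ} (hp : Differentiable ℝ p) (x y : ℝ) :
    HasDerivAt (fun s => p (s, y)) (pdx p (x, y)) x := by
  have h1 : HasFDerivAt p (fderiv ℝ p (x, y)) (x, y) := (hp (x, y)).hasFDerivAt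
  have h2 : HasDerivAt (fun s : ℝ => (s, y)) ((1 : ℝ), (0 : ℝ)) x := by
    simpa using (hasDerivAt_id x).prodMk (hasDerivAt_const x y)
  exact h1.comp_hasDerivAt x h2

lemma hasDerivAt_pdy {p : ℝ × ℝ → ℝ} (hp : Differentiable ℝ p) (x y : ℝ) :
    HasDerivAt (fun s => p (x, s)) (pdy p (x, y)) y := by
  have h1 : HasFDerivAt p (fderiv ℝ p (x, y)) (x, y) := (hp (x, y)).hasFDerivAt
  have h2 : HasDerivAt (fun s : ℝ => (x, s)) ((0 : ℝ), (1 : ℝ)) y := by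
    simpa using (hasDerivAt_const y x).prodMk (hasDerivAt_id y)
  exact h1.comp_hasDerivAt y h2

/-! ### Product rules -/

lemma pdx_mul {f g : ℝ × ℝ → ℝ} (hf : Differentiable ℝ f) (hg : Differentiable ℝ g) :
    pdx (fun z => f z * g z) = fun z => pdx f z * g z + f z * pdx g z := by
  funext z
  unfold pdx
  rw [fderiv_fun_mul (hf z) (hg z)]
  simp [mul_comm]
  ring

lemma pdy_mul {f g : ℝ × ℝ → ℝ} (hf : Differentiable ℝ f) (hg : Differentiable ℝ g) :
    pdy (fun z => f z * g z) = fun z => pdy f z * g z + f z * pdy g z := by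
  funext z
  unfold pdy
  rw [fderiv_fun_mul (hf z) (hg z)]
  simp [mul_comm]
  ring

/-! ### Basic properties of `torusInt` -/

lemma torusInt_congr {f g : ℝ × ℝ → ℝ} (h : ∀ z, f z = g z) : torusInt f = torusInt g := by
  unfold torusInt; simp only [h]

lemma torusInt_const_mul (k : ℝ) (f : ℝ × ℝ → ℝ) :
    torusInt (fun z => k * f z) = k * torusInt f := by
  unfold torusInt
  simp only [intervalIntegral.integral_const_mul]

lemma torusInt_add {f g : ℝ × ℝ → ℝ} (hf : Continuous f) (hg : Continuous g) :
    torusInt (fun z => f z + g z) = torusInt f + torusInt g := by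
  unfold torusInt
  have hfi : ∀ x : ℝ, IntervalIntegrable (fun y => f (x, y)) volume 0 1 := fun x =>
    (hf.comp (continuous_const.prodMk continuous_id)).intervalIntegrable 0 1
  have hgi : ∀ x : ℝ, IntervalIntegrable (fun y => g (x, y)) volume 0 1 := fun x =>
    (hg.comp (continuous_const.prodMk continuous_id)).intervalIntegrable 0 1
  have h1 : ∀ x : ℝ, (∫ y in (0:ℝ)..1, (f (x, y) + g (x, y)))
      = (∫ y in (0:ℝ)..1, f (x, y)) + ∫ y in (0:ℝ)..1, g (x, y) := fun x =>
    intervalIntegral.integral_add (hfi x) (hgi x)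
  rw [intervalIntegral.integral_congr
    (g := fun x => (∫ y in (0:ℝ)..1, f (x, y)) + ∫ y in (0:ℝ)..1, g (x, y)) (fun x _ => h1 x)]
  have cf : Continuous fun x : ℝ => ∫ y in (0:ℝ)..1, f (x, y) := by
    apply intervalIntegral.continuous_parametric_intervalIntegral_of_continuous'
      (f := fun x y => f (x, y))
    exact hf
  have cg : Continuous fun x : ℝ => ∫ y in (0:ℝ)..1, g (x, y) := by
    apply intervalIntegral.continuous_parametric_intervalIntegral_of_continuous'
      (f := fun x y => g (x, y))
    exact hg
  exact intervalIntegral.integral_add (cf.intervalIntegrable 0 1) (cg.intervalIntegrable 0 1)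

lemma torusInt_sub {f g : ℝ × ℝ → ℝ} (hf : Continuous f) (hg : Continuous g) :
    torusInt (fun z => f z - g z) = torusInt f - torusInt g := by
  have h1 : torusInt (fun z => f z - g z) = torusInt (fun z => f z + (-1) * g z) :=
    torusInt_congr (fun z => by ring)
  rw [h1, torusInt_add hf (by continuity), torusInt_const_mul]
  ring

lemma torusInt_const (k : ℝ) : torusInt (fun _ => k) = k := by
  unfold torusInt; simp

lemma torusInt_add_zero {f g : ℝ × ℝ → ℝ} (hf : Continuous f) (hg : Continuous g)
    (h1 : torusInt f = 0) (h2 : torusInt g = 0) : torusInt (fun z => f z + g z) = 0 := by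
  rw [torusInt_add hf hg, h1, h2, add_zero]

/-! ### Fubini on the unit square -/

lemma torusInt_swap {f : ℝ × ℝ → ℝ} (hf : Continuous f) :
    torusInt f = ∫ y in (0:ℝ)..1, ∫ x in (0:ℝ)..1, f (x, y) := by
  unfold torusInt
  have key : (∫ x in Set.Ioc (0:ℝ) 1, ∫ y in Set.Ioc (0:ℝ) 1, f (x, y))
      = ∫ y in Set.Ioc (0:ℝ) 1, ∫ x in Set.Ioc (0:ℝ) 1, f (x, y) := by
    have hprod : Integrable (Function.uncurry fun x y => f (x, y))
        ((volume.restrict (Set.Ioc (0:ℝ) 1)).prod (volume.restrict (Set.Ioc (0:ℝ) 1))) := by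
      rw [Measure.prod_restrict]
      have he : Function.uncurry (fun x y => f (x, y)) = f := by funext z; rfl
      rw [he]
      have hint : IntegrableOn f (Set.Ioc (0:ℝ) 1 ×ˢ Set.Ioc (0:ℝ) 1) volume := by
        apply (hf.continuousOn.integrableOn_compact (isCompact_Icc.prod isCompact_Icc)).mono_set
        exact Set.prod_mono Set.Ioc_subset_Icc_self Set.Ioc_subset_Icc_self
      rwa [← Measure.volume_eq_prod]
    exact integral_integral_swap hprod
  rw [intervalIntegral.integral_of_le zero_le_one, intervalIntegral.integral_of_le zero_le_one]
  simp only [intervalIntegral.integral_of_le zero_le_one]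
  exact key

/-! ### Vanishing of torus integrals of derivatives -/

lemma torusInt_pdy_zero {H : ℝ × ℝ → ℝ} (hd : Differentiable ℝ H)
    (hc : Continuous (pdy H)) (hper : Biperiodic H) : torusInt (pdy H) = 0 := by
  unfold torusInt
  have h1 : ∀ x : ℝ, (∫ y in (0:ℝ)..1, pdy H (x, y)) = 0 := by
    intro x
    rw [intervalIntegral.integral_eq_sub_of_hasDerivAt
      (f := fun s => H (x, s)) (fun s _ => hasDerivAt_pdy hd x s)
      ((hc.comp (continuous_const.prodMk continuous_id)).intervalIntegrable 0 1)]
    have := (hper x 0).2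
    rw [zero_add] at this
    rw [this, sub_self]
  simp only [h1, intervalIntegral.integral_zero]

lemma torusInt_pdx_zero {G : ℝ × ℝ → ℝ} (hd : Differentiable ℝ G)
    (hc : Continuous (pdx G)) (hper : Biperiodic G) : torusInt (pdx G) = 0 := by
  rw [torusInt_swap hc]
  have h1 : ∀ y : ℝ, (∫ x in (0:ℝ)..1, pdx G (x, y)) = 0 := by
    intro y
    rw [intervalIntegral.integral_eq_sub_of_hasDerivAt
      (f := fun s => G (s, y)) (fun s _ => hasDerivAt_pdx hd s y)
      ((hc.comp (continuous_id.prodMk continuous_const)).intervalIntegrable 0 1)]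
    have := (hper 0 y).1
    rw [zero_add] at this
    rw [this, sub_self]
  simp only [h1, intervalIntegral.integral_zero]

/-! ### Integration-by-parts style lemmas -/

lemma torusInt_dx_mul {f g : ℝ × ℝ → ℝ} (hf : ContDiff ℝ (⊤ : ℕ∞) f)
    (hg : ContDiff ℝ (⊤ : ℕ∞) g) (hfp : Biperiodic f) (hgp : Biperiodic g) :
    torusInt (fun z => pdx f z * g z + f z * pdx g z) = 0 := by
  rw [← pdx_mul (hf.differentiable (by decide)) (hg.differentiable (by decide))]
  exact torusInt_pdx_zero ((hf.mul hg).differentiable (by decide))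
    (contDiff_pdx (hf.mul hg)).continuous (Biperiodic.mul hfp hgp)

lemma torusInt_dy_mul {f g : ℝ × ℝ → ℝ} (hf : ContDiff ℝ (⊤ : ℕ∞) f)
    (hg : ContDiff ℝ (⊤ : ℕ∞) g) (hfp : Biperiodic f) (hgp : Biperiodic g) :
    torusInt (fun z => pdy f z * g z + f z * pdy g z) = 0 := by
  rw [← pdy_mul (hf.differentiable (by decide)) (hg.differentiable (by decide))]
  exact torusInt_pdy_zero ((hf.mul hg).differentiable (by decide))
    (contDiff_pdy (hf.mul hg)).continuous (Biperiodic.mul hfp hgp)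

lemma torusInt_mul_dx {f g : ℝ × ℝ → ℝ} (hf : ContDiff ℝ (⊤ : ℕ∞) f)
    (hg : ContDiff ℝ (⊤ : ℕ∞) g) (hfp : Biperiodic f) (hgp : Biperiodic g) :
    torusInt (fun z => f z * pdx g z) = -torusInt (fun z => pdx f z * g z) := by
  have h0 := torusInt_dx_mul hf hg hfp hgp
  have hc1 : Continuous fun z => pdx f z * g z :=
    (contDiff_pdx hf).continuous.mul hg.continuous
  have hc2 : Continuous fun z => f z * pdx g z :=
    hf.continuous.mul (contDiff_pdx hg).continuous
  rw [torusInt_add hc1 hc2] at h0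
  linarith

lemma torusInt_mul_dy {f g : ℝ × ℝ → ℝ} (hf : ContDiff ℝ (⊤ : ℕ∞) f)
    (hg : ContDiff ℝ (⊤ : ℕ∞) g) (hfp : Biperiodic f) (hgp : Biperiodic g) :
    torusInt (fun z => f z * pdy g z) = -torusInt (fun z => pdy f z * g z) := by
  have h0 := torusInt_dy_mul hf hg hfp hgp
  have hc1 : Continuous fun z => pdy f z * g z :=
    (contDiff_pdy hf).continuous.mul hg.continuous
  have hc2 : Continuous fun z => f z * pdy g z :=
    hf.continuous.mul (contDiff_pdy hg).continuous
  rw [torusInt_add hc1 hc2] at h0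
  linarith

lemma torusInt_sq_dx {f : ℝ × ℝ → ℝ} (hf : ContDiff ℝ (⊤ : ℕ∞) f) (hfp : Biperiodic f) :
    torusInt (fun z => f z * pdx f z) = 0 := by
  have h0 := torusInt_dx_mul hf hf hfp hfp
  have h1 : torusInt (fun z => pdx f z * f z + f z * pdx f z)
      = torusInt (fun z => (2:ℝ) * (f z * pdx f z)) := torusInt_congr (fun z => by ring)
  rw [h1, torusInt_const_mul] at h0
  linarith

lemma torusInt_sq_dy {f : ℝ × ℝ → ℝ} (hf : ContDiff ℝ (⊤ : ℕ∞) f) (hfp : Biperiodic f) :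
    torusInt (fun z => f z * pdy f z) = 0 := by
  have h0 := torusInt_dy_mul hf hf hfp hfp
  have h1 : torusInt (fun z => pdy f z * f z + f z * pdy f z)
      = torusInt (fun z => (2:ℝ) * (f z * pdy f z)) := torusInt_congr (fun z => by ring)
  rw [h1, torusInt_const_mul] at h0
  linarith

end StAux

open StAux

/-- For the continuity method: under the normalization `∫ e^F = ab - c²`, the operator
`S_t` maps (smooth biperiodic functions, identified with functions on the torus) into
functions with zero mean, for every `t ∈ [0,1]`. -/
theorem St_integrates_to_zero (a b c l11 l12 l22 m11 m12 m22 : ℝ)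
    (hpd : (!![a, c; c, b]).PosDef)
    (h1 : m11 * l22 = 0)
    (h2 : l11 * l22 - l12 ^ 2 = 0)
    (h3 : m11 * m22 - m12 ^ 2 = 0)
    (h4 : l11 * m22 + l22 * m11 - 2 * l12 * m12 = 0)
    (F : ℝ × ℝ → ℝ) (hF : ContDiff ℝ (⊤ : ℕ∞) F) (hFper : Biperiodic F)
    (hnorm : torusInt (fun z => Real.exp (F z)) = a * b - c ^ 2) :
    ∀ t : ℝ, t ∈ Set.Icc (0:ℝ) 1 →
      ∀ p : ℝ × ℝ → ℝ, ContDiff ℝ (⊤ : ℕ∞) p → Biperiodic p →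
        torusInt (fun z =>
          (a + pdx (pdx p) z - t * l11 * pdx p z - t * m11 * pdy p z) *
              (b + pdy (pdy p) z - t * l22 * pdx p z - t * m22 * pdy p z) -
            (c + pdy (pdx p) z - t * l12 * pdx p z - t * m12 * pdy p z) ^ 2 -
            (t * Real.exp (F z) + (1 - t) * (a * b - c ^ 2))) = 0 := by
  intro t _ p hp hper
  -- smoothness facts
  have hX : ContDiff ℝ (⊤ : ℕ∞) (pdx p) := contDiff_pdx hp
  have hY : ContDiff ℝ (⊤ : ℕ∞) (pdy p) := contDiff_pdy hp
  have hXX : ContDiff ℝ (⊤ : ℕ∞) (pdx (pdx p)) := contDiff_pdx hX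
  have hYY : ContDiff ℝ (⊤ : ℕ∞) (pdy (pdy p)) := contDiff_pdy hY
  have hXY : ContDiff ℝ (⊤ : ℕ∞) (pdy (pdx p)) := contDiff_pdy hX
  have hpd' : Differentiable ℝ p := hp.differentiable (by decide)
  -- periodicity facts
  have pX : Biperiodic (pdx p) := Biperiodic.pdx' hpd' hper
  have pY : Biperiodic (pdy p) := Biperiodic.pdy' hpd' hper
  have pXX : Biperiodic (pdx (pdx p)) := Biperiodic.pdx' (hX.differentiable (by decide)) pX
  have pYY : Biperiodic (pdy (pdy p)) := Biperiodic.pdy' (hY.differentiable (by decide)) pY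
  have pXY : Biperiodic (pdy (pdx p)) := Biperiodic.pdy' (hX.differentiable (by decide)) pX
  -- continuity facts
  have cX : Continuous (pdx p) := hX.continuous
  have cY : Continuous (pdy p) := hY.continuous
  have cXX : Continuous (pdx (pdx p)) := hXX.continuous
  have cYY : Continuous (pdy (pdy p)) := hYY.continuous
  have cXY : Continuous (pdy (pdx p)) := hXY.continuous
  have cE : Continuous fun z : ℝ × ℝ => Real.exp (F z) := Real.continuous_exp.comp hF.continuous
  -- Clairaut
  have hsymm : pdx (pdy p) = pdy (pdx p) := pdxy_symm hp
  have h3rd : pdx (pdy (pdy p)) = pdy (pdy (pdx p)) := by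
    rw [pdxy_symm hY, ← hsymm]
  -- zero integrals: first derivatives
  have hZ1 : torusInt (pdx (pdx p)) = 0 :=
    torusInt_pdx_zero (hX.differentiable (by decide)) cXX pX
  have hZ2 : torusInt (pdy (pdy p)) = 0 :=
    torusInt_pdy_zero (hY.differentiable (by decide)) cYY pY
  have hZ3 : torusInt (pdy (pdx p)) = 0 :=
    torusInt_pdy_zero (hX.differentiable (by decide)) cXY pX
  have hZ4 : torusInt (pdx p) = 0 := torusInt_pdx_zero hpd' cX hper
  have hZ5 : torusInt (pdy p) = 0 := torusInt_pdy_zero hpd' cY hper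
  -- zero integrals: quadratic combinations
  have hQ1 : torusInt (fun z => pdx p z * pdx (pdx p) z) = 0 := torusInt_sq_dx hX pX
  have hQ4 : torusInt (fun z => pdy p z * pdy (pdy p) z) = 0 := torusInt_sq_dy hY pY
  have hQ5 : torusInt (fun z => pdx p z * pdy (pdx p) z) = 0 := torusInt_sq_dy hX pX
  have hQ6 : torusInt (fun z => pdy p z * pdy (pdx p) z) = 0 := by
    have := torusInt_sq_dx hY pY
    rwa [show (fun z => pdy p z * pdx (pdy p) z) = fun z => pdy p z * pdy (pdx p) z by
      funext z; rw [hsymm]] at this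
  have hQ3 : torusInt (fun z => pdx p z * pdy (pdy p) z) = 0 := by
    rw [torusInt_mul_dy hX hY pX pY]
    rw [torusInt_congr (g := fun z => pdy p z * pdy (pdx p) z) (fun z => by ring)]
    rw [hQ6]; ring
  have hQ2 : torusInt (fun z => pdy p z * pdx (pdx p) z) = 0 := by
    rw [torusInt_mul_dx hY hX pY pX]
    rw [torusInt_congr (g := fun z => pdx p z * pdy (pdx p) z)
      (fun z => by rw [hsymm]; ring)]
    rw [hQ5]; ring
  -- ∫ (p_xx p_yy − p_xy²) = 0
  have hW : torusInt (fun z => pdx (pdx p) z * pdy (pdy p) z - pdy (pdx p) z ^ 2) = 0 := by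
    have hA := torusInt_mul_dx hX hYY pX pYY
    have hB := torusInt_mul_dy hX hXY pX pXY
    have hAB : torusInt (fun z => pdx p z * pdx (pdy (pdy p)) z)
        = torusInt (fun z => pdx p z * pdy (pdy (pdx p)) z) := by
      apply torusInt_congr; intro z; rw [h3rd]
    rw [hAB, hB] at hA
    have e2 : torusInt (fun z => pdx (pdx p) z * pdy (pdy p) z)
        = torusInt (fun z => pdy (pdx p) z * pdy (pdx p) z) := by linarith
    rw [torusInt_sub (f := fun z => pdx (pdx p) z * pdy (pdy p) z) (cXX.mul cYY) (by fun_prop : Continuous fun z => pdy (pdx p) z ^ 2)]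
    rw [torusInt_congr (f := fun z => pdy (pdx p) z ^ 2)
      (g := fun z => pdy (pdx p) z * pdy (pdx p) z) (fun z => by ring)]
    rw [e2]; ring
  -- the exp part
  have hE : torusInt (fun z => t * (a * b - c ^ 2 - Real.exp (F z))) = 0 := by
    rw [torusInt_const_mul, torusInt_sub (by fun_prop) cE, torusInt_const, hnorm]
    ring
  -- pointwise decomposition of the integrand
  rw [torusInt_congr (g := fun z =>
      b * pdx (pdx p) z +
      (a * pdy (pdy p) z +
      ((-(2 * c)) * pdy (pdx p) z +
      ((-(t * (a * l22 + b * l11 - 2 * c * l12))) * pdx p z +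
      ((-(t * (a * m22 + b * m11 - 2 * c * m12))) * pdy p z +
      ((-(t * l22)) * (pdx p z * pdx (pdx p) z) +
      ((-(t * m22)) * (pdy p z * pdx (pdx p) z) +
      ((-(t * l11)) * (pdx p z * pdy (pdy p) z) +
      ((-(t * m11)) * (pdy p z * pdy (pdy p) z) +
      ((2 * t * l12) * (pdx p z * pdy (pdx p) z) +
      ((2 * t * m12) * (pdy p z * pdy (pdx p) z) +
      ((pdx (pdx p) z * pdy (pdy p) z - pdy (pdx p) z ^ 2) +
      t * (a * b - c ^ 2 - Real.exp (F z))))))))))))))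
    (fun z => by
      linear_combination (t ^ 2 * pdx p z ^ 2) * h2 + (t ^ 2 * pdy p z ^ 2) * h3 +
        (t ^ 2 * (pdx p z * pdy p z)) * h4)]
  -- peel off the terms
  refine torusInt_add_zero (by fun_prop) (by fun_prop)
    (by rw [torusInt_const_mul, hZ1, mul_zero]) ?_
  refine torusInt_add_zero (by fun_prop) (by fun_prop)
    (by rw [torusInt_const_mul, hZ2, mul_zero]) ?_
  refine torusInt_add_zero (by fun_prop) (by fun_prop)
    (by rw [torusInt_const_mul, hZ3, mul_zero]) ?_
  refine torusInt_add_zero (by fun_prop) (by fun_prop)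
    (by rw [torusInt_const_mul, hZ4, mul_zero]) ?_
  refine torusInt_add_zero (by fun_prop) (by fun_prop)
    (by rw [torusInt_const_mul, hZ5, mul_zero]) ?_
  refine torusInt_add_zero (by fun_prop) (by fun_prop)
    (by rw [torusInt_const_mul, hQ1, mul_zero]) ?_
  refine torusInt_add_zero (by fun_prop) (by fun_prop)
    (by rw [torusInt_const_mul, hQ2, mul_zero]) ?_
  refine torusInt_add_zero (by fun_prop) (by fun_prop)
    (by rw [torusInt_const_mul, hQ3, mul_zero]) ?_
  refine torusInt_add_zero (by fun_prop) (by fun_prop)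
    (by rw [torusInt_const_mul, hQ4, mul_zero]) ?_
  refine torusInt_add_zero (by fun_prop) (by fun_prop)
    (by rw [torusInt_const_mul, hQ5, mul_zero]) ?_
  refine torusInt_add_zero (by fun_prop) (by fun_prop)
    (by rw [torusInt_const_mul, hQ6, mul_zero]) ?_
  exact torusInt_add_zero (by fun_prop) (by fun_prop) hW hE
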